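/- arXiv:1702.07629 — 2 statements merged into one kernel-verified Lean document; each statement's English description precedes it below -/
import Mathlib

section
/- Let A be a unital complex Banach algebra, M a unital A-bimodule, n ≥ 2, and let Δ be a 2-local derivation from M_n(A) into M_n(M) that vanishes on the linear span of the matrix units {e_{ij}}_{i,j=1}^n. If x = Σ_{i=1}^n x_{ii} is a diagonal matrix in M_n(A) (where x_{ii} = e_{ii} x e_{ii}), then e_{kk} Δ(x) e_{kk} = Δ(x_{kk}) for every k with 1 ≤ k ≤ n. -/
open MulOpposite Matrix

variable (A M : Type*) [NormedRing A] [NormedAlgebra ℂ A] [CompleteSpace A]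
  [AddCommGroup M] [Module ℂ M] [Module A M] [Module Aᵐᵒᵖ M]
  [SMulCommClass A Aᵐᵒᵖ M] [IsScalarTower ℂ A M] [IsScalarTower ℂ Aᵐᵒᵖ M]

/-- `D : A → M` is a derivation from the Banach algebra `A` into the unital
`A`-bimodule `M`: a `ℂ`-linear map with the Leibniz rule (the right action of
`A` on `M` is written via `Aᵐᵒᵖ`). -/
def IsDerivation (D : A → M) : Prop :=
  IsLinearMap ℂ D ∧ ∀ x y : A, D (x * y) = op y • D x + x • D y

variable {n : ℕ}

/-- The left action of `Mₙ(A)` on `Mₙ(M)`: `(x · Y)_{ij} = Σ_k x_{ik} · Y_{kj}`. -/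
def matL (x : Matrix (Fin n) (Fin n) A) (Y : Matrix (Fin n) (Fin n) M) :
    Matrix (Fin n) (Fin n) M :=
  Matrix.of fun i j => ∑ k, x i k • Y k j

/-- The right action of `Mₙ(A)` on `Mₙ(M)`: `(Y · x)_{ij} = Σ_k Y_{ik} · x_{kj}`. -/
def matR (Y : Matrix (Fin n) (Fin n) M) (x : Matrix (Fin n) (Fin n) A) :
    Matrix (Fin n) (Fin n) M :=
  Matrix.of fun i j => ∑ k, op (x k j) • Y i k

/-- A derivation from `Mₙ(A)` into the `Mₙ(A)`-bimodule `Mₙ(M)`. -/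
def IsMatDerivation (D : Matrix (Fin n) (Fin n) A → Matrix (Fin n) (Fin n) M) : Prop :=
  IsLinearMap ℂ D ∧
    ∀ x y : Matrix (Fin n) (Fin n) A, D (x * y) = matR A M (D x) y + matL A M x (D y)

/-- A 2-local derivation from `Mₙ(A)` into `Mₙ(M)`: for each pair of points there
is a derivation agreeing with `Δ` at both of them. -/
def Is2LocalMatDerivation (Δ : Matrix (Fin n) (Fin n) A → Matrix (Fin n) (Fin n) M) : Prop :=
  ∀ x y : Matrix (Fin n) (Fin n) A,
    ∃ D : Matrix (Fin n) (Fin n) A → Matrix (Fin n) (Fin n) M,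
      IsMatDerivation A M D ∧ Δ x = D x ∧ Δ y = D y

/-- The matrix unit `e_{ij}`: the unit of `A` at position `(i,j)`, zeros elsewhere. -/
def matUnit (i j : Fin n) : Matrix (Fin n) (Fin n) A :=
  Matrix.single i j 1

/-- The linear span of the matrix units `{e_{ij}}`. -/
noncomputable def unitSpan (n : ℕ) : Submodule ℂ (Matrix (Fin n) (Fin n) A) :=
  Submodule.span ℂ (Set.range fun p : Fin n × Fin n => Matrix.single p.1 p.2 (1 : A))

/-- The set `Dₙ(A)` of diagonal matrices in `Mₙ(A)`. -/
def diagSet (n : ℕ) : Set (Matrix (Fin n) (Fin n) A) :=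
  {x | ∀ i j : Fin n, i ≠ j → x i j = 0}


set_option linter.unusedSectionVars false

section AuxCorner

variable {A M}

lemma matL_add (x : Matrix (Fin n) (Fin n) A) (Y Z : Matrix (Fin n) (Fin n) M) :
    matL A M x (Y + Z) = matL A M x Y + matL A M x Z := by
  ext i j
  simp [matL, smul_add, Finset.sum_add_distrib]

lemma matR_add (Y Z : Matrix (Fin n) (Fin n) M) (x : Matrix (Fin n) (Fin n) A) :
    matR A M (Y + Z) x = matR A M Y x + matR A M Z x := by
  ext i j
  simp [matR, smul_add, Finset.sum_add_distrib]

lemma matL_zero (x : Matrix (Fin n) (Fin n) A) :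
    matL A M x (0 : Matrix (Fin n) (Fin n) M) = 0 := by
  ext i j; simp [matL]

lemma matR_zero (x : Matrix (Fin n) (Fin n) A) :
    matR A M (0 : Matrix (Fin n) (Fin n) M) x = 0 := by
  ext i j; simp [matR]

lemma matL_matL (x y : Matrix (Fin n) (Fin n) A) (Y : Matrix (Fin n) (Fin n) M) :
    matL A M x (matL A M y Y) = matL A M (x * y) Y := by
  ext i j
  simp only [matL, Matrix.of_apply, Matrix.mul_apply, Finset.smul_sum, Finset.sum_smul,
    mul_smul]
  rw [Finset.sum_comm]

lemma matR_matR (Y : Matrix (Fin n) (Fin n) M) (x y : Matrix (Fin n) (Fin n) A) :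
    matR A M (matR A M Y x) y = matR A M Y (x * y) := by
  ext i j
  simp only [matR, Matrix.of_apply, Matrix.mul_apply, Finset.smul_sum, Finset.op_sum,
    Finset.sum_smul, op_mul, mul_smul]
  rw [Finset.sum_comm]

lemma matL_matR (x : Matrix (Fin n) (Fin n) A) (Y : Matrix (Fin n) (Fin n) M)
    (y : Matrix (Fin n) (Fin n) A) :
    matL A M x (matR A M Y y) = matR A M (matL A M x Y) y := by
  ext i j
  simp only [matL, matR, Matrix.of_apply, Finset.smul_sum]
  rw [Finset.sum_comm]
  exact Finset.sum_congr rfl fun l _ => Finset.sum_congr rfl fun k _ => smul_comm _ _ _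

/-- For any derivation `D` and idempotent `e`, `e · D e · e = 0`. -/
lemma corner_deriv_zero {D : Matrix (Fin n) (Fin n) A → Matrix (Fin n) (Fin n) M}
    (hD : IsMatDerivation A M D) {e : Matrix (Fin n) (Fin n) A} (he : e * e = e) :
    matL A M e (matR A M (D e) e) = 0 := by
  have h := hD.2 e e
  rw [he] at h
  have h3 : matL A M e (matR A M (D e) e)
      = matL A M e (matR A M (D e) e) + matL A M e (matR A M (D e) e) := by
    conv_lhs => rw [h]
    simp only [matR_add, matL_add, matR_matR, matL_matR, matL_matL, he]
  exact left_eq_add.mp h3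

/-- If `D e = 0` and `u = e*u = u*e`, then `D u = e · D u · e`. -/
lemma deriv_corner_self {D : Matrix (Fin n) (Fin n) A → Matrix (Fin n) (Fin n) M}
    (hD : IsMatDerivation A M D) {e u : Matrix (Fin n) (Fin n) A}
    (hDe : D e = 0) (heu : e * u = u) (hue : u * e = u) :
    D u = matL A M e (matR A M (D u) e) := by
  have h1 : D u = matR A M (D u) e := by
    conv_lhs => rw [← hue, hD.2 u e, hDe, matL_zero, add_zero]
  have h2 : D u = matL A M e (D u) := by
    conv_lhs => rw [← heu, hD.2 e u, hDe, matR_zero, zero_add]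
  calc D u = matL A M e (D u) := h2
    _ = matL A M e (matR A M (D u) e) := by rw [← h1]

/-- For any derivation `D`, idempotent `e` commuting with `x`:
`e · D (e*x*e) · e = e · D x · e`. -/
lemma corner_deriv_eq {D : Matrix (Fin n) (Fin n) A → Matrix (Fin n) (Fin n) M}
    (hD : IsMatDerivation A M D) {e x : Matrix (Fin n) (Fin n) A}
    (he : e * e = e) (hcomm : e * x = x * e) :
    matL A M e (matR A M (D (e * x * e)) e) = matL A M e (matR A M (D x) e) := by
  have h0 : matL A M e (matR A M (D e) e) = 0 := corner_deriv_zero hD he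
  have h0' : matR A M (matL A M e (D e)) e = 0 := by rw [← matL_matR]; exact h0
  have hxe : x * e * e = x * e := by rw [mul_assoc, he]
  have hexe : e * (x * e) = x * e := by rw [← mul_assoc, hcomm, mul_assoc, he]
  rw [hD.2 (e * x) e, hD.2 e x]
  simp only [matR_add, matL_add]
  -- three terms
  have t1 : matL A M e (matR A M (matR A M (matR A M (D e) x) e) e) = 0 := by
    rw [matR_matR, matR_matR, he, ← hexe, ← matR_matR, matL_matR, h0, matR_zero]
  have t2 : matL A M e (matR A M (matR A M (matL A M e (D x)) e) e)
      = matL A M e (matR A M (D x) e) := by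
    rw [matR_matR, he, matL_matR, matL_matL, he, ← matL_matR]
  have t3 : matL A M e (matR A M (matL A M (e * x) (D e)) e) = 0 := by
    rw [matL_matR, matL_matL, ← mul_assoc, he, hcomm, ← matL_matL, ← matL_matR, h0',
      matL_zero]
  rw [t1, t2, t3, zero_add, add_zero]

end AuxCorner

/-- if a 2-local derivation `Δ : Mₙ(A) → Mₙ(M)` (`n ≥ 2`) vanishes on the
span of the matrix units and `x` is a diagonal matrix, then
`e_{kk} · Δ x · e_{kk} = Δ (x_{kk})` for every `k`, where `x_{kk} = e_{kk} x e_{kk}`. -/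
theorem twoLocal_diag_corner (n : ℕ) (hn : 2 ≤ n)
    (Δ : Matrix (Fin n) (Fin n) A → Matrix (Fin n) (Fin n) M)
    (hΔ : Is2LocalMatDerivation A M Δ)
    (hvan : ∀ t ∈ unitSpan A n, Δ t = 0)
    (x : Matrix (Fin n) (Fin n) A) (hx : x ∈ diagSet A n) :
    ∀ k : Fin n,
      matL A M (matUnit A k k) (matR A M (Δ x) (matUnit A k k)) =
        Δ (matUnit A k k * x * matUnit A k k) := by
  intro k
  set e := matUnit A k k with he_def
  have hee : e * e = e := by
    simp [he_def, matUnit, Matrix.single_mul_single_same]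
  have hcomm : e * x = x * e := by
    ext i j
    simp only [he_def, matUnit, Matrix.mul_apply, Matrix.single, Matrix.of_apply,
      ite_mul, mul_ite, one_mul, mul_one, zero_mul, mul_zero, ite_and,
      Finset.sum_ite_eq, Finset.sum_ite_eq', Finset.mem_univ, if_true]
    rcases eq_or_ne k i with rfl | hki
    · simp only [if_true]
      rw [Finset.sum_ite_eq]
      simp only [Finset.mem_univ, if_true]
      rcases eq_or_ne k j with rfl | hkj
      · simp
      · simp [hkj, hx k j hkj]
    · simp [hki, hx i k (Ne.symm hki)]
  set u := e * x * e with hu_def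
  have heu : e * u = u := by
    rw [hu_def, ← mul_assoc, ← mul_assoc, hee]
  have hue : u * e = u := by
    rw [hu_def, mul_assoc, mul_assoc, hee, ← mul_assoc]
  have hΔe : Δ e = 0 := hvan e (Submodule.subset_span ⟨(k, k), rfl⟩)
  obtain ⟨D, hD, hDx, hDu⟩ := hΔ x u
  obtain ⟨D', hD', hD'u, hD'e⟩ := hΔ u e
  have hD'e0 : D' e = 0 := by rw [← hD'e]; exact hΔe
  calc matL A M e (matR A M (Δ x) e)
      = matL A M e (matR A M (D x) e) := by rw [hDx]
    _ = matL A M e (matR A M (D u) e) := (corner_deriv_eq hD hee hcomm).symm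
    _ = matL A M e (matR A M (D' u) e) := by rw [← hDu, hD'u]
    _ = D' u := (deriv_corner_self hD' hD'e0 heu hue).symm
    _ = Δ u := hD'u.symm
end

section
/- Let A be a unital complex Banach algebra, M a unital A-bimodule, n ≥ 3, and let Δ be a 2-local derivation from M_n(A) into M_n(M) that vanishes on the linear span of the matrix units {e_{ij}}_{i,j=1}^n. Then for every i with 1 ≤ i ≤ n, the restriction Δ_{ii} of Δ to A_{ii} = e_{ii} M_n(A) e_{ii} is additive: Δ(x + y) = Δ(x) + Δ(y) for all x, y ∈ A_{ii}. -/
set_option linter.unusedSectionVars false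
set_option maxHeartbeats 1000000


open MulOpposite Matrix

variable (A M : Type*) [NormedRing A] [NormedAlgebra ℂ A] [CompleteSpace A]
  [AddCommGroup M] [Module ℂ M] [Module A M] [Module Aᵐᵒᵖ M]
  [SMulCommClass A Aᵐᵒᵖ M] [IsScalarTower ℂ A M] [IsScalarTower ℂ Aᵐᵒᵖ M]

variable {n : ℕ}

theorem TLD_matL_apply (x : Matrix (Fin n) (Fin n) A) (Y : Matrix (Fin n) (Fin n) M)
    (p q : Fin n) : matL A M x Y p q = ∑ t, x p t • Y t q := rfl

theorem TLD_matR_apply (Y : Matrix (Fin n) (Fin n) M) (x : Matrix (Fin n) (Fin n) A)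
    (p q : Fin n) : matR A M Y x p q = ∑ t, op (x t q) • Y p t := rfl

theorem TLD_sb_apply (r s p q : Fin n) (c : A) :
    (single r s c) p q = if r = p ∧ s = q then c else 0 := rfl

theorem TLD_aux_sum_op (r s q : Fin n) (c : A) (b : Fin n → M) :
    (∑ t, op ((single r s c) t q) • b t) = if s = q then op c • b r else 0 := by
  have h : ∀ t : Fin n, op ((single r s c) t q) • b t
      = if t = r then (if s = q then op c • b t else 0) else 0 := by
    intro t
    rw [TLD_sb_apply]
    by_cases h1 : t = r
    · subst h1
      by_cases h2 : s = q
      · simp [h2]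
      · simp [h2]
    · have : ¬(r = t ∧ s = q) := fun hh => h1 hh.1.symm
      simp [this, h1]
  rw [Finset.sum_congr rfl fun t _ => h t, Finset.sum_ite_eq' Finset.univ r _]
  simp

theorem TLD_aux_sum_smul (r s p : Fin n) (c : A) (b : Fin n → M) :
    (∑ t, ((single r s c) p t) • b t) = if r = p then c • b s else 0 := by
  have h : ∀ t : Fin n, ((single r s c) p t) • b t
      = if t = s then (if r = p then c • b t else 0) else 0 := by
    intro t
    rw [TLD_sb_apply]
    by_cases h1 : t = s
    · subst h1
      by_cases h2 : r = p
      · simp [h2]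
      · simp [h2]
    · have : ¬(r = p ∧ s = t) := fun hh => h1 hh.2.symm
      simp [this, h1]
  rw [Finset.sum_congr rfl fun t _ => h t, Finset.sum_ite_eq' Finset.univ s _]
  simp

theorem TLD_matR_matR (Y : Matrix (Fin n) (Fin n) M) (u v : Matrix (Fin n) (Fin n) A) :
    matR A M (matR A M Y u) v = matR A M Y (u * v) := by
  funext p q
  rw [TLD_matR_apply, TLD_matR_apply]
  calc (∑ t, op (v t q) • matR A M Y u p t)
      = ∑ t, ∑ l, op (u l t * v t q) • Y p l := by
        refine Finset.sum_congr rfl fun t _ => ?_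
        rw [TLD_matR_apply, Finset.smul_sum]
        refine Finset.sum_congr rfl fun l _ => ?_
        rw [smul_smul, ← op_mul]
    _ = ∑ l, ∑ t, op (u l t * v t q) • Y p l := Finset.sum_comm
    _ = ∑ l, op ((u * v) l q) • Y p l := by
        refine Finset.sum_congr rfl fun l _ => ?_
        rw [Matrix.mul_apply, Finset.op_sum, Finset.sum_smul]

theorem TLD_matL_matL (u v : Matrix (Fin n) (Fin n) A) (Y : Matrix (Fin n) (Fin n) M) :
    matL A M (u * v) Y = matL A M u (matL A M v Y) := by
  funext p q
  rw [TLD_matL_apply, TLD_matL_apply]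
  calc (∑ t, (u * v) p t • Y t q)
      = ∑ t, ∑ l, (u p l * v l t) • Y t q := by
        refine Finset.sum_congr rfl fun t _ => ?_
        rw [Matrix.mul_apply, Finset.sum_smul]
    _ = ∑ l, ∑ t, (u p l * v l t) • Y t q := Finset.sum_comm
    _ = ∑ l, u p l • matL A M v Y l q := by
        refine Finset.sum_congr rfl fun l _ => ?_
        rw [TLD_matL_apply, Finset.smul_sum]
        refine Finset.sum_congr rfl fun t _ => ?_
        rw [smul_smul]

theorem TLD_matL_matR (u : Matrix (Fin n) (Fin n) A) (Y : Matrix (Fin n) (Fin n) M)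
    (v : Matrix (Fin n) (Fin n) A) :
    matL A M u (matR A M Y v) = matR A M (matL A M u Y) v := by
  funext p q
  rw [TLD_matL_apply, TLD_matR_apply]
  calc (∑ t, u p t • matR A M Y v t q)
      = ∑ t, ∑ l, u p t • op (v l q) • Y t l := by
        refine Finset.sum_congr rfl fun t _ => ?_
        rw [TLD_matR_apply, Finset.smul_sum]
    _ = ∑ l, ∑ t, op (v l q) • u p t • Y t l := by
        rw [Finset.sum_comm]
        refine Finset.sum_congr rfl fun l _ => Finset.sum_congr rfl fun t _ => ?_
        rw [smul_comm]
    _ = ∑ l, op (v l q) • matL A M u Y p l := by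
        refine Finset.sum_congr rfl fun l _ => ?_
        rw [TLD_matL_apply, Finset.smul_sum]

theorem TLD_matR_one (Y : Matrix (Fin n) (Fin n) M) : matR A M Y 1 = Y := by
  funext p q
  rw [TLD_matR_apply]
  have h : ∀ t : Fin n, op ((1 : Matrix (Fin n) (Fin n) A) t q) • Y p t
      = if t = q then op (1 : A) • Y p t else 0 := by
    intro t
    by_cases h1 : t = q
    · subst h1; simp [Matrix.one_apply]
    · simp [Matrix.one_apply, h1]
  rw [Finset.sum_congr rfl fun t _ => h t, Finset.sum_ite_eq' Finset.univ q _]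
  simp

theorem TLD_matR_zero_left (v : Matrix (Fin n) (Fin n) A) :
    matR A M (0 : Matrix (Fin n) (Fin n) M) v = 0 := by
  funext p q; rw [TLD_matR_apply]; simp

theorem TLD_matR_zero_right (Y : Matrix (Fin n) (Fin n) M) :
    matR A M Y (0 : Matrix (Fin n) (Fin n) A) = 0 := by
  funext p q; rw [TLD_matR_apply]; simp

theorem TLD_matL_zero_right (u : Matrix (Fin n) (Fin n) A) :
    matL A M u (0 : Matrix (Fin n) (Fin n) M) = 0 := by
  funext p q; rw [TLD_matL_apply]; simp

theorem TLD_matR_sub_left (Y Z : Matrix (Fin n) (Fin n) M) (v : Matrix (Fin n) (Fin n) A) :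
    matR A M (Y - Z) v = matR A M Y v - matR A M Z v := by
  funext p q
  rw [Matrix.sub_apply, TLD_matR_apply, TLD_matR_apply, TLD_matR_apply, ← Finset.sum_sub_distrib]
  refine Finset.sum_congr rfl fun t _ => ?_
  rw [Matrix.sub_apply, smul_sub]

theorem TLD_matL_sub_right (u : Matrix (Fin n) (Fin n) A) (Y Z : Matrix (Fin n) (Fin n) M) :
    matL A M u (Y - Z) = matL A M u Y - matL A M u Z := by
  funext p q
  rw [Matrix.sub_apply, TLD_matL_apply, TLD_matL_apply, TLD_matL_apply, ← Finset.sum_sub_distrib]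
  refine Finset.sum_congr rfl fun t _ => ?_
  rw [Matrix.sub_apply, smul_sub]

theorem TLD_matR_add_right (Y : Matrix (Fin n) (Fin n) M) (u v : Matrix (Fin n) (Fin n) A) :
    matR A M Y (u + v) = matR A M Y u + matR A M Y v := by
  funext p q
  rw [Matrix.add_apply, TLD_matR_apply, TLD_matR_apply, TLD_matR_apply, ← Finset.sum_add_distrib]
  refine Finset.sum_congr rfl fun t _ => ?_
  rw [Matrix.add_apply, op_add, add_smul]

theorem TLD_matL_add_left (u v : Matrix (Fin n) (Fin n) A) (Y : Matrix (Fin n) (Fin n) M) :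
    matL A M (u + v) Y = matL A M u Y + matL A M v Y := by
  funext p q
  rw [Matrix.add_apply, TLD_matL_apply, TLD_matL_apply, TLD_matL_apply, ← Finset.sum_add_distrib]
  refine Finset.sum_congr rfl fun t _ => ?_
  rw [Matrix.add_apply, add_smul]

theorem TLD_matR_sum_left {ι : Type*} (s : Finset ι) (f : ι → Matrix (Fin n) (Fin n) M)
    (v : Matrix (Fin n) (Fin n) A) :
    matR A M (∑ r ∈ s, f r) v = ∑ r ∈ s, matR A M (f r) v := by
  funext p q
  rw [TLD_matR_apply, Matrix.sum_apply]
  calc (∑ t, op (v t q) • (∑ r ∈ s, f r) p t)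
      = ∑ t, ∑ r ∈ s, op (v t q) • f r p t := by
        refine Finset.sum_congr rfl fun t _ => ?_
        rw [Matrix.sum_apply, Finset.smul_sum]
    _ = ∑ r ∈ s, ∑ t, op (v t q) • f r p t := Finset.sum_comm
    _ = ∑ r ∈ s, matR A M (f r) v p q := by
        refine Finset.sum_congr rfl fun r _ => (TLD_matR_apply A M _ _ _ _).symm

theorem TLD_matR_sum_right {ι : Type*} (s : Finset ι) (Y : Matrix (Fin n) (Fin n) M)
    (f : ι → Matrix (Fin n) (Fin n) A) :
    matR A M Y (∑ r ∈ s, f r) = ∑ r ∈ s, matR A M Y (f r) := by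
  funext p q
  rw [TLD_matR_apply, Matrix.sum_apply]
  calc (∑ t, op ((∑ r ∈ s, f r) t q) • Y p t)
      = ∑ t, ∑ r ∈ s, op (f r t q) • Y p t := by
        refine Finset.sum_congr rfl fun t _ => ?_
        rw [Matrix.sum_apply, Finset.op_sum, Finset.sum_smul]
    _ = ∑ r ∈ s, ∑ t, op (f r t q) • Y p t := Finset.sum_comm
    _ = ∑ r ∈ s, matR A M Y (f r) p q := by
        refine Finset.sum_congr rfl fun r _ => (TLD_matR_apply A M _ _ _ _).symm

theorem TLD_matL_sum_right {ι : Type*} (s : Finset ι) (u : Matrix (Fin n) (Fin n) A)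
    (f : ι → Matrix (Fin n) (Fin n) M) :
    matL A M u (∑ r ∈ s, f r) = ∑ r ∈ s, matL A M u (f r) := by
  funext p q
  rw [TLD_matL_apply, Matrix.sum_apply]
  calc (∑ t, u p t • (∑ r ∈ s, f r) t q)
      = ∑ t, ∑ r ∈ s, u p t • f r t q := by
        refine Finset.sum_congr rfl fun t _ => ?_
        rw [Matrix.sum_apply, Finset.smul_sum]
    _ = ∑ r ∈ s, ∑ t, u p t • f r t q := Finset.sum_comm
    _ = ∑ r ∈ s, matL A M u (f r) p q := by
        refine Finset.sum_congr rfl fun r _ => (TLD_matL_apply A M _ _ _ _).symm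

theorem TLD_sb_mul_apply (r s p q : Fin n) (c : A) (z : Matrix (Fin n) (Fin n) A) :
    (single r s c * z) p q = if r = p then c * z s q else 0 := by
  rw [Matrix.mul_apply]
  have h : ∀ t : Fin n, (single r s c) p t * z t q
      = if t = s then (if r = p then c * z t q else 0) else 0 := by
    intro t
    rw [TLD_sb_apply]
    by_cases h1 : t = s
    · subst h1
      by_cases h2 : r = p
      · simp [h2]
      · simp [h2]
    · have : ¬(r = p ∧ s = t) := fun hh => h1 hh.2.symm
      simp [this, h1]
  rw [Finset.sum_congr rfl fun t _ => h t, Finset.sum_ite_eq' Finset.univ s _]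
  simp

theorem TLD_mul_sb_apply (r s p q : Fin n) (c : A) (z : Matrix (Fin n) (Fin n) A) :
    (z * single r s c) p q = if s = q then z p r * c else 0 := by
  rw [Matrix.mul_apply]
  have h : ∀ t : Fin n, z p t * (single r s c) t q
      = if t = r then (if s = q then z p t * c else 0) else 0 := by
    intro t
    rw [TLD_sb_apply]
    by_cases h1 : t = r
    · subst h1
      by_cases h2 : s = q
      · simp [h2]
      · simp [h2]
    · have : ¬(r = t ∧ s = q) := fun hh => h1 hh.1.symm
      simp [this, h1]
  rw [Finset.sum_congr rfl fun t _ => h t, Finset.sum_ite_eq' Finset.univ r _]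
  simp

theorem TLD_sb_mul_sb (p q r s : Fin n) (c d : A) :
    single p q c * single r s d
      = if q = r then single p s (c * d) else 0 := by
  by_cases h : q = r
  · subst h; rw [if_pos rfl]; exact Matrix.single_mul_single_same (c := c) p q s d
  · rw [if_neg h]; exact Matrix.single_mul_single_of_ne (c := c) p q r h d

theorem TLD_sum_sb_diag : (∑ r : Fin n, single r r (1 : A)) = 1 := by
  funext p q
  rw [Matrix.sum_apply]
  have h : ∀ r : Fin n, (single r r (1 : A)) p q
      = if r = p then (if p = q then (1 : A) else 0) else 0 := by
    intro r
    rw [TLD_sb_apply]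
    by_cases h1 : r = p
    · by_cases h2 : p = q
      · simp [h1, h2, h1.trans h2]
      · have : ¬(r = p ∧ r = q) := fun hh => h2 (h1.symm.trans hh.2)
        simp [this, h1, h2]
    · have : ¬(r = p ∧ r = q) := fun hh => h1 hh.1
      simp [this, h1]
  rw [Finset.sum_congr rfl fun r _ => h r, Finset.sum_ite_eq' Finset.univ p _]
  simp [Matrix.one_apply]

/-- Structure theorem for derivations `Mₙ(A) → Mₙ(M)`, entrywise form. -/
theorem TLD_exists_rep (hn0 : 0 < n)
    (D : Matrix (Fin n) (Fin n) A → Matrix (Fin n) (Fin n) M)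
    (hD : IsMatDerivation A M D) :
    ∃ (a : Matrix (Fin n) (Fin n) M) (δ : A → M),
      (∀ c d : A, δ (c + d) = δ c + δ d) ∧ δ 1 = 0 ∧
      ∀ z (p q : Fin n), D z p q
        = (∑ t, op (z t q) • a p t) - (∑ t, z p t • a t q) + δ (z p q) := by
  classical
  set u₀ : Fin n := ⟨0, hn0⟩ with hu₀
  have hDadd : ∀ z w, D (z + w) = D z + D w := fun z w => hD.1.map_add z w
  have hDzero : D 0 = 0 := hD.1.map_zero
  set a : Matrix (Fin n) (Fin n) M :=
    ∑ r : Fin n, matR A M (D (single r u₀ (1 : A))) (single u₀ r (1 : A)) with ha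
  have h1 : ∀ p q : Fin n, matR A M a (single p q (1 : A))
      = matR A M (D (single p u₀ (1 : A))) (single u₀ q (1 : A)) := by
    intro p q
    rw [ha, TLD_matR_sum_left]
    have h : ∀ r : Fin n,
        matR A M (matR A M (D (single r u₀ (1 : A))) (single u₀ r (1 : A)))
          (single p q (1 : A))
        = if r = p then
            matR A M (D (single p u₀ (1 : A))) (single u₀ q (1 : A)) else 0 := by
      intro r
      rw [TLD_matR_matR, TLD_sb_mul_sb]
      by_cases hrp : r = p
      · subst hrp; simp
      · simp [hrp, TLD_matR_zero_right]
    rw [Finset.sum_congr rfl fun r _ => h r, Finset.sum_ite_eq' Finset.univ p _]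
    simp
  have h2 : ∀ p q : Fin n, matL A M (single p q (1 : A)) a
      = matR A M (D (single p u₀ (1 : A))) (single u₀ q (1 : A))
          - D (single p q (1 : A)) := by
    intro p q
    rw [ha, TLD_matL_sum_right]
    have step1 : ∀ r : Fin n,
        matL A M (single p q (1 : A))
          (matR A M (D (single r u₀ (1 : A))) (single u₀ r (1 : A)))
        = matR A M (D (single p q (1 : A) * single r u₀ (1 : A)))
            (single u₀ r (1 : A))
          - matR A M (matR A M (D (single p q (1 : A))) (single r u₀ (1 : A)))
              (single u₀ r (1 : A)) := by
      intro r
      rw [TLD_matL_matR]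
      have hleib := hD.2 (single p q (1 : A)) (single r u₀ (1 : A))
      have : matL A M (single p q (1 : A)) (D (single r u₀ (1 : A)))
          = D (single p q (1 : A) * single r u₀ (1 : A))
            - matR A M (D (single p q (1 : A))) (single r u₀ (1 : A)) := by
        rw [hleib]; abel
      rw [this, TLD_matR_sub_left]
    rw [Finset.sum_congr rfl fun r _ => step1 r, Finset.sum_sub_distrib]
    congr 1
    · have h : ∀ r : Fin n,
          matR A M (D (single p q (1 : A) * single r u₀ (1 : A)))
            (single u₀ r (1 : A))
          = if r = q then
              matR A M (D (single p u₀ (1 : A))) (single u₀ r (1 : A)) else 0 := by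
        intro r
        rw [TLD_sb_mul_sb]
        by_cases hrq : r = q
        · subst hrq; simp
        · have : ¬(q = r) := fun hh => hrq hh.symm
          simp [this, hrq, hDzero, TLD_matR_zero_left]
      rw [Finset.sum_congr rfl fun r _ => h r, Finset.sum_ite_eq' Finset.univ q _]
      simp
    · have h : ∀ r : Fin n,
          matR A M (matR A M (D (single p q (1 : A))) (single r u₀ (1 : A)))
            (single u₀ r (1 : A))
          = matR A M (D (single p q (1 : A)))
              (single r u₀ (1 : A) * single u₀ r (1 : A)) := by
        intro r; rw [TLD_matR_matR]
      rw [Finset.sum_congr rfl fun r _ => h r, ← TLD_matR_sum_right]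
      have : (∑ r : Fin n, single r u₀ (1 : A) * single u₀ r (1 : A))
          = (1 : Matrix (Fin n) (Fin n) A) := by
        have h' : ∀ r : Fin n, single r u₀ (1 : A) * single u₀ r (1 : A)
            = single r r (1 : A) := by
          intro r; rw [TLD_sb_mul_sb, if_pos rfl, one_mul]
        rw [Finset.sum_congr rfl fun r _ => h' r, TLD_sum_sb_diag]
      rw [this, TLD_matR_one]
  have hunit : ∀ p q : Fin n, D (single p q (1 : A))
      = matR A M a (single p q (1 : A)) - matL A M (single p q (1 : A)) a := by
    intro p q; rw [h1, h2]; abel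
  set D0 : Matrix (Fin n) (Fin n) A → Matrix (Fin n) (Fin n) M :=
    fun z => D z - (matR A M a z - matL A M z a) with hD0def
  have hD0add : ∀ z w, D0 (z + w) = D0 z + D0 w := by
    intro z w
    simp only [hD0def]
    rw [hDadd, TLD_matR_add_right, TLD_matL_add_left]
    abel
  have hD0unit : ∀ p q : Fin n, D0 (single p q (1 : A)) = 0 := by
    intro p q
    simp only [hD0def]
    rw [hunit]; abel
  have hD0leib : ∀ z w, D0 (z * w) = matR A M (D0 z) w + matL A M z (D0 w) := by
    intro z w
    simp only [hD0def]
    rw [hD.2 z w, TLD_matR_sub_left, TLD_matR_sub_left, TLD_matL_sub_right, TLD_matL_sub_right,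
      TLD_matR_matR, ← TLD_matL_matR, ← TLD_matL_matL]
    abel
  have htriple : ∀ (z : Matrix (Fin n) (Fin n) A) (p q : Fin n),
      single u₀ p (1 : A) * z * single q u₀ (1 : A)
        = single u₀ u₀ (z p q) := by
    intro z p q
    funext r s
    rw [TLD_mul_sb_apply, TLD_sb_mul_apply, TLD_sb_apply]
    by_cases h1 : u₀ = s
    · by_cases h2 : u₀ = r
      · simp [h1, h2]
      · have : ¬(u₀ = r ∧ u₀ = s) := fun hh => h2 hh.1
        simp [h1, h2, this]
    · have : ¬(u₀ = r ∧ u₀ = s) := fun hh => h1 hh.2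
      simp [h1, this]
  set δ : A → M := fun c => D0 (single u₀ u₀ c) u₀ u₀ with hδdef
  have hval : ∀ z (p q : Fin n), D0 z p q = δ (z p q) := by
    intro z p q
    have h4 : D0 (single u₀ p (1 : A) * z * single q u₀ (1 : A))
        = matR A M (matL A M (single u₀ p (1 : A)) (D0 z)) (single q u₀ (1 : A)) := by
      rw [hD0leib, hD0unit, TLD_matL_zero_right, add_zero, hD0leib, hD0unit, TLD_matR_zero_left,
        zero_add]
    have h5 : (matR A M (matL A M (single u₀ p (1 : A)) (D0 z))
        (single q u₀ (1 : A))) u₀ u₀ = D0 z p q := by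
      rw [TLD_matR_apply, TLD_aux_sum_op, if_pos rfl, TLD_matL_apply, TLD_aux_sum_smul,
        if_pos rfl, op_one, one_smul, one_smul]
    calc D0 z p q = (matR A M (matL A M (single u₀ p (1 : A)) (D0 z))
        (single q u₀ (1 : A))) u₀ u₀ := h5.symm
      _ = D0 (single u₀ p (1 : A) * z * single q u₀ (1 : A)) u₀ u₀ := by
          rw [h4]
      _ = δ (z p q) := by rw [htriple]
  refine ⟨a, δ, ?_, ?_, ?_⟩
  · intro c d
    simp only [hδdef]
    rw [Matrix.single_add, hD0add, Matrix.add_apply]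
  · simp only [hδdef]
    rw [hD0unit u₀ u₀, Matrix.zero_apply]
  · intro z p q
    have : D z = D0 z + (matR A M a z - matL A M z a) := by
      simp only [hD0def]; abel
    rw [this, Matrix.add_apply, Matrix.sub_apply, hval, TLD_matR_apply, TLD_matL_apply]
    abel

theorem TLD_supp (hn0 : 0 < n)
    (Δ : Matrix (Fin n) (Fin n) A → Matrix (Fin n) (Fin n) M)
    (hΔ : Is2LocalMatDerivation A M Δ)
    (hvan : ∀ t ∈ unitSpan A n, Δ t = 0)
    (z : Matrix (Fin n) (Fin n) A) (p q : Fin n) (hz : z p q = 0) :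
    Δ z p q = 0 := by
  classical
  set s : Matrix (Fin n) (Fin n) A :=
    ∑ r : Fin n, (((r : ℕ) : ℂ)) • single r r (1 : A) with hs
  have hsmem : s ∈ unitSpan A n := by
    rw [hs]
    exact Submodule.sum_mem _ fun r _ =>
      Submodule.smul_mem _ _ (Submodule.subset_span ⟨(r, r), rfl⟩)
  have hsapply : ∀ p' q' : Fin n,
      s p' q' = if p' = q' then (((p' : ℕ) : ℂ)) • (1 : A) else 0 := by
    intro p' q'
    rw [hs, Matrix.sum_apply]
    have h : ∀ r : Fin n, ((((r : ℕ) : ℂ)) • single r r (1 : A)) p' q'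
        = if r = p' then (if p' = q' then (((p' : ℕ) : ℂ)) • (1 : A) else 0) else 0 := by
      intro r
      rw [Matrix.smul_apply, TLD_sb_apply]
      by_cases h1 : r = p'
      · by_cases h2 : p' = q'
        · simp [h1, h2, h1.trans h2]
        · have : ¬(r = p' ∧ r = q') := fun hh => h2 (h1.symm.trans hh.2)
          simp [this, h1, h2]
      · have : ¬(r = p' ∧ r = q') := fun hh => h1 hh.1
        simp [this, h1]
    rw [Finset.sum_congr rfl fun r _ => h r, Finset.sum_ite_eq' Finset.univ p' _]
    simp
  obtain ⟨D, hD, hzD, hsD⟩ := hΔ z s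
  obtain ⟨a, δ, hδadd, hδone, hform⟩ := TLD_exists_rep A M hn0 D hD
  have hδ0 : δ 0 = 0 := by
    have h := hδadd 0 0
    rw [add_zero] at h
    exact (left_eq_add.mp h)
  have hDs : ∀ p' q' : Fin n, D s p' q' = 0 := by
    intro p' q'
    rw [← hsD, hvan s hsmem, Matrix.zero_apply]
  have hdiag : ∀ p' q' : Fin n, p' ≠ q' → a p' q' = 0 := by
    intro p' q' hne
    have h0 := hform s p' q'
    rw [hDs p' q'] at h0
    have hsum1 : (∑ t, op (s t q') • a p' t) = ((q' : ℕ) : ℂ) • a p' q' := by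
      have h : ∀ t : Fin n, op (s t q') • a p' t
          = if t = q' then ((q' : ℕ) : ℂ) • a p' q' else 0 := by
        intro t
        rw [hsapply]
        by_cases h1 : t = q'
        · rw [if_pos h1, if_pos h1, op_smul, op_one, smul_assoc, one_smul, h1]
        · rw [if_neg h1, if_neg h1, op_zero, zero_smul]
      rw [Finset.sum_congr rfl fun t _ => h t, Finset.sum_ite_eq' Finset.univ q' _]
      simp
    have hsum2 : (∑ t, s p' t • a t q') = ((p' : ℕ) : ℂ) • a p' q' := by
      have h : ∀ t : Fin n, s p' t • a t q'
          = if t = p' then ((p' : ℕ) : ℂ) • a p' q' else 0 := by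
        intro t
        rw [hsapply]
        by_cases h1 : t = p'
        · rw [if_pos (h1.symm : p' = t)]
          rw [smul_assoc, one_smul, h1, if_pos rfl]
        · rw [if_neg (fun hh => h1 hh.symm : ¬ p' = t), zero_smul, if_neg h1]
      rw [Finset.sum_congr rfl fun t _ => h t, Finset.sum_ite_eq' Finset.univ p' _]
      simp
    have hspq : s p' q' = 0 := by rw [hsapply, if_neg hne]
    rw [hsum1, hsum2, hspq, hδ0, add_zero] at h0
    have h1 : ((((q' : ℕ) : ℂ)) - (((p' : ℕ) : ℂ))) • a p' q' = 0 := by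
      rw [sub_smul]; exact h0.symm
    have hc : ((((q' : ℕ) : ℂ)) - (((p' : ℕ) : ℂ))) ≠ 0 := by
      refine sub_ne_zero.mpr ?_
      intro hEq
      exact hne (Fin.ext (Nat.cast_injective hEq).symm)
    exact (smul_eq_zero.mp h1).resolve_left hc
  rw [hzD, hform]
  have hsum1 : (∑ t, op (z t q) • a p t) = 0 := by
    refine Finset.sum_eq_zero fun t _ => ?_
    by_cases h : t = p
    · subst h; rw [hz, op_zero, zero_smul]
    · rw [hdiag p t (fun hh => h hh.symm), smul_zero]
  have hsum2 : (∑ t, z p t • a t q) = 0 := by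
    refine Finset.sum_eq_zero fun t _ => ?_
    by_cases h : t = q
    · subst h; rw [hz, zero_smul]
    · rw [hdiag t q h, smul_zero]
  rw [hsum1, hsum2, hz, hδ0, add_zero, sub_zero]

theorem TLD_lemC (hn0 : 0 < n)
    (Δ : Matrix (Fin n) (Fin n) A → Matrix (Fin n) (Fin n) M)
    (hΔ : Is2LocalMatDerivation A M Δ)
    (i j : Fin n) (hji : j ≠ i) (X : A) :
    Δ (single i i X) i i
      = Δ (single i j X + single j i 1) i j
        + X • Δ (single i j X + single j i 1) j i := by
  obtain ⟨D, hD, h1, h2⟩ :=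
    hΔ (single i i X) (single i j X + single j i 1)
  obtain ⟨a, δ, hδadd, hδone, hform⟩ := TLD_exists_rep A M hn0 D hD
  have hij : ¬ i = j := fun h => hji h.symm
  rw [h1, h2, hform, hform, hform]
  simp only [Matrix.add_apply, op_add, add_smul, Finset.sum_add_distrib,
    TLD_aux_sum_op, TLD_aux_sum_smul]
  simp only [TLD_sb_apply, hij, hji, and_self, and_true, true_and, and_false, false_and,
    if_true, if_false, eq_self_iff_true, op_zero, zero_smul, smul_zero, op_one, one_smul,
    add_zero, zero_add, hδone, smul_sub, smul_add]
  abel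

theorem TLD_lemB (hn0 : 0 < n)
    (Δ : Matrix (Fin n) (Fin n) A → Matrix (Fin n) (Fin n) M)
    (hΔ : Is2LocalMatDerivation A M Δ)
    (i j k : Fin n) (hji : j ≠ i) (hki : k ≠ i) (hkj : k ≠ j) (X Y : A) :
    Δ (single i i (X + Y)) i i
      = Δ (single i j X + single j i 1
            + (single i k Y + single k i 1)) i j
        + Δ (single i j X + single j i 1
            + (single i k Y + single k i 1)) i k
        + X • Δ (single i j X + single j i 1
            + (single i k Y + single k i 1)) j i
        + Y • Δ (single i j X + single j i 1
            + (single i k Y + single k i 1)) k i := by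
  obtain ⟨D, hD, h1, h2⟩ :=
    hΔ (single i i (X + Y))
      (single i j X + single j i 1
        + (single i k Y + single k i 1))
  obtain ⟨a, δ, hδadd, hδone, hform⟩ := TLD_exists_rep A M hn0 D hD
  have hij : ¬ i = j := fun h => hji h.symm
  have hik : ¬ i = k := fun h => hki h.symm
  have hjk : ¬ j = k := fun h => hkj h.symm
  rw [h1, h2, hform, hform, hform, hform, hform]
  simp only [Matrix.add_apply, op_add, add_smul, Finset.sum_add_distrib,
    TLD_aux_sum_op, TLD_aux_sum_smul]
  simp only [TLD_sb_apply, hij, hji, hik, hki, hjk, hkj, and_self, and_true, true_and,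
    and_false, false_and, if_true, if_false, eq_self_iff_true, op_zero, zero_smul, smul_zero,
    op_one, one_smul, add_zero, zero_add, hδone, hδadd, op_add, add_smul, smul_sub, smul_add]
  abel

theorem TLD_lemD (hn0 : 0 < n)
    (Δ : Matrix (Fin n) (Fin n) A → Matrix (Fin n) (Fin n) M)
    (hΔ : Is2LocalMatDerivation A M Δ)
    (hvan : ∀ t ∈ unitSpan A n, Δ t = 0)
    (i j k : Fin n) (hji : j ≠ i) (hki : k ≠ i) (hkj : k ≠ j) (X Y : A) :
    Δ (single i j X + single j i 1
          + (single i k Y + single k i 1)) i j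
      + X • Δ (single i j X + single j i 1
          + (single i k Y + single k i 1)) j i
    = Δ (single i j X + single j i 1) i j
      + X • Δ (single i j X + single j i 1) j i := by
  have hij : ¬ i = j := fun h => hji h.symm
  have hik : ¬ i = k := fun h => hki h.symm
  have hjk : ¬ j = k := fun h => hkj h.symm
  have hsupp1 : Δ (single i j X + single j i 1) k i = 0 := by
    refine TLD_supp A M hn0 Δ hΔ hvan _ k i ?_
    simp [Matrix.add_apply, TLD_sb_apply, hik, hjk, hki, hkj]
  have hsupp2 : Δ (single i j X + single j i 1) i k = 0 := by
    refine TLD_supp A M hn0 Δ hΔ hvan _ i k ?_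
    simp [Matrix.add_apply, TLD_sb_apply, hik, hjk, hki, hkj]
  obtain ⟨D, hD, h1, h2⟩ :=
    hΔ (single i j X + single j i 1
          + (single i k Y + single k i 1))
      (single i j X + single j i 1)
  obtain ⟨a, δ, hδadd, hδone, hform⟩ := TLD_exists_rep A M hn0 D hD
  have hδ0 : δ 0 = 0 := by
    have h := hδadd 0 0
    rw [add_zero] at h
    exact (left_eq_add.mp h)
  have he1 : a k j = 0 := by
    have h := hsupp1
    rw [h2, hform] at h
    simp only [Matrix.add_apply, op_add, add_smul, Finset.sum_add_distrib,
      TLD_aux_sum_op, TLD_aux_sum_smul] at h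
    simp only [TLD_sb_apply, hij, hji, hik, hki, hjk, hkj, and_self, and_true, true_and,
      and_false, false_and, if_true, if_false, eq_self_iff_true, op_zero, zero_smul, smul_zero,
      op_one, one_smul, add_zero, zero_add, sub_zero, hδ0] at h
    exact h
  have he2 : X • a j k = 0 := by
    have h := hsupp2
    rw [h2, hform] at h
    simp only [Matrix.add_apply, op_add, add_smul, Finset.sum_add_distrib,
      TLD_aux_sum_op, TLD_aux_sum_smul] at h
    simp only [TLD_sb_apply, hij, hji, hik, hki, hjk, hkj, and_self, and_true, true_and,
      and_false, false_and, if_true, if_false, eq_self_iff_true, op_zero, zero_smul, smul_zero,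
      op_one, one_smul, add_zero, zero_add, zero_sub, neg_eq_zero, hδ0] at h
    exact h
  rw [h1, h2, hform, hform, hform, hform]
  simp only [Matrix.add_apply, op_add, add_smul, Finset.sum_add_distrib,
    TLD_aux_sum_op, TLD_aux_sum_smul]
  simp only [TLD_sb_apply, hij, hji, hik, hki, hjk, hkj, and_self, and_true, true_and,
    and_false, false_and, if_true, if_false, eq_self_iff_true, op_zero, zero_smul, smul_zero,
    op_one, one_smul, add_zero, zero_add, hδone, hδ0, smul_sub, smul_add, he1, he2]

theorem TLD_pick (hn : 3 ≤ n) (i : Fin n) : ∃ j k : Fin n, j ≠ i ∧ k ≠ i ∧ k ≠ j := by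
  have h0 : 0 < n := by omega
  have h1 : 1 < n := by omega
  have h2 : 2 < n := by omega
  by_cases hi0 : i = ⟨0, h0⟩
  · exact ⟨⟨1, h1⟩, ⟨2, h2⟩,
      by simp [hi0, Fin.ext_iff], by simp [hi0, Fin.ext_iff], by simp [Fin.ext_iff]⟩
  · by_cases hi1 : i = ⟨1, h1⟩
    · exact ⟨⟨0, h0⟩, ⟨2, h2⟩,
        by simp [hi1, Fin.ext_iff], by simp [hi1, Fin.ext_iff], by simp [Fin.ext_iff]⟩
    · exact ⟨⟨0, h0⟩, ⟨1, h1⟩,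
        fun h => hi0 h.symm, fun h => hi1 h.symm, by simp [Fin.ext_iff]⟩

theorem TLD_corner (i : Fin n) (x : Matrix (Fin n) (Fin n) A)
    (hx : x = matUnit A i i * x * matUnit A i i) :
    x = single i i (x i i) := by
  have h2 : matUnit A i i * x * matUnit A i i = single i i (x i i) := by
    funext p q
    rw [matUnit, TLD_mul_sb_apply, TLD_sb_apply]
    by_cases h1 : i = q
    · rw [if_pos h1, TLD_sb_mul_apply]
      by_cases hp : i = p
      · rw [if_pos hp, if_pos ⟨hp, h1⟩, one_mul, mul_one]
      · have : ¬(i = p ∧ i = q) := fun hh => hp hh.1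
        simp [hp, this]
    · have : ¬(i = p ∧ i = q) := fun hh => h1 hh.2
      rw [if_neg h1, if_neg this]
  exact hx.trans h2


/-- if a 2-local derivation `Δ : Mₙ(A) → Mₙ(M)` (`n ≥ 3`) vanishes on the
span of the matrix units, then the restriction of `Δ` to each corner
`A_{ii} = e_{ii} Mₙ(A) e_{ii}` is additive. -/
theorem twoLocal_corner_additive (n : ℕ) (hn : 3 ≤ n)
    (Δ : Matrix (Fin n) (Fin n) A → Matrix (Fin n) (Fin n) M)
    (hΔ : Is2LocalMatDerivation A M Δ)
    (hvan : ∀ t ∈ unitSpan A n, Δ t = 0) :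
    ∀ (i : Fin n) (x y : Matrix (Fin n) (Fin n) A),
      x = matUnit A i i * x * matUnit A i i →
      y = matUnit A i i * y * matUnit A i i →
      Δ (x + y) = Δ x + Δ y := by
  intro i x y hx hy
  have hn0 : 0 < n := by omega
  obtain ⟨j, k, hji, hki, hkj⟩ := TLD_pick hn i
  have hx' : x = single i i (x i i) := TLD_corner A i x hx
  have hy' : y = single i i (y i i) := TLD_corner A i y hy
  set X := x i i with hXdef
  set Y := y i i with hYdef
  rw [hx', hy', ← Matrix.single_add]
  funext p q
  rw [Matrix.add_apply]
  by_cases hpq : p = i ∧ q = i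
  · obtain ⟨hp, hq⟩ := hpq
    rw [hp, hq]
    have hB := TLD_lemB A M hn0 Δ hΔ i j k hji hki hkj X Y
    have hC1 := TLD_lemC A M hn0 Δ hΔ i j hji X
    have hC2 := TLD_lemC A M hn0 Δ hΔ i k hki Y
    have hD1 := TLD_lemD A M hn0 Δ hΔ hvan i j k hji hki hkj X Y
    have hD2 := TLD_lemD A M hn0 Δ hΔ hvan i k j hki hji (fun h => hkj h.symm) Y X
    have hRR : single i k Y + single k i (1 : A)
          + (single i j X + single j i 1)
        = single i j X + single j i 1
          + (single i k Y + single k i 1) := by abel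
    rw [hRR] at hD2
    rw [hB, hC1, hC2, ← hD1, ← hD2]
    abel
  · have h1 : (single i i (X + Y)) p q = 0 := by
      rw [TLD_sb_apply, if_neg (fun hh => hpq ⟨hh.1.symm, hh.2.symm⟩)]
    have h2 : (single i i X) p q = 0 := by
      rw [TLD_sb_apply, if_neg (fun hh => hpq ⟨hh.1.symm, hh.2.symm⟩)]
    have h3 : (single i i Y) p q = 0 := by
      rw [TLD_sb_apply, if_neg (fun hh => hpq ⟨hh.1.symm, hh.2.symm⟩)]
    rw [TLD_supp A M hn0 Δ hΔ hvan _ p q h1, TLD_supp A M hn0 Δ hΔ hvan _ p q h2,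
      TLD_supp A M hn0 Δ hΔ hvan _ p q h3, add_zero]
end
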